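/- Let $a_1,\ldots,a_n$ be positive integers and let $Y_1,\ldots,Y_n$ be i.i.d. random variables with $\mathbb{P}(Y_k=1)=\mathbb{P}(Y_k=-1)=1/2$. Then for every integer $x$, $\mathbb{P}\left(\sum_{k=1}^n a_k Y_k = x\right) \leq 1/\sqrt{n}$. -/

import Mathlib

open MeasureTheory ProbabilityTheory ENNReal

lemma aux16 : ∀ m : ℕ, (3*m+1) * (Nat.centralBinom m)^2 ≤ 16^m := by
  intro m
  induction m with
  | zero => simp [Nat.centralBinom]
  | succ m ih =>
    have key := Nat.succ_mul_centralBinom_succ m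
    have hpos : 0 < (m+1)^2 := by positivity
    refine Nat.le_of_mul_le_mul_left ?_ hpos
    have e : (m+1)^2 * ((3*(m+1)+1) * (Nat.centralBinom (m+1))^2)
        = (3*m+4) * ((m+1)*Nat.centralBinom (m+1))^2 := by ring
    rw [e, key]
    have e2 : (3*m+4) * (2*(2*m+1)*Nat.centralBinom m)^2
        = ((3*m+4)*4*(2*m+1)^2) * (Nat.centralBinom m)^2 := by ring
    rw [e2]
    calc ((3*m+4)*4*(2*m+1)^2) * (Nat.centralBinom m)^2
        ≤ (16*(3*m+1)*(m+1)^2) * (Nat.centralBinom m)^2 := by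
          apply Nat.mul_le_mul_right; nlinarith
      _ = (m+1)^2 * (16 * ((3*m+1) * (Nat.centralBinom m)^2)) := by ring
      _ ≤ (m+1)^2 * (16 * 16^m) := by
          apply Nat.mul_le_mul_left; exact Nat.mul_le_mul_left _ ih
      _ = (m+1)^2 * 16^(m+1) := by ring

lemma auxB (n : ℕ) : n * (n.choose (n/2))^2 ≤ 4^n := by
  rcases Nat.even_or_odd n with ⟨m, hm⟩ | ⟨m, hm⟩
  · subst hm
    have hdiv : (m + m)/2 = m := by omega
    have hcb : (m+m).choose m = Nat.centralBinom m := by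
      rw [Nat.centralBinom_eq_two_mul_choose]; congr 1; omega
    rw [hdiv, hcb]
    calc (m+m) * (Nat.centralBinom m)^2 ≤ (3*m+1) * (Nat.centralBinom m)^2 := by
          apply Nat.mul_le_mul_right; omega
      _ ≤ 16^m := aux16 m
      _ ≤ 4^(m+m) := by
          rw [show 4^(m+m) = (4^2)^m by rw [← pow_mul]; congr 1; omega]; norm_num
  · subst hm
    have hdiv : (2*m+1)/2 = m := by omega
    rw [hdiv]
    have hsym : (2*m+1).choose (m+1) = (2*m+1).choose m := by
      have := Nat.choose_symm (n := 2*m+1) (k := m+1) (by omega)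
      rw [show 2*m+1-(m+1) = m by omega] at this
      exact this.symm
    have hcb : Nat.centralBinom (m+1) = 2 * (2*m+1).choose m := by
      rw [Nat.centralBinom_eq_two_mul_choose,
        show 2*(m+1) = (2*m+1)+1 by ring, show m+1 = m+1 from rfl,
        Nat.choose_succ_succ, hsym]
      omega
    have hmain : 4 * ((2*m+1) * ((2*m+1).choose m)^2) ≤ 4 * 4^(2*m+1) := by
      calc 4 * ((2*m+1) * ((2*m+1).choose m)^2)
          = (2*m+1) * (2*(2*m+1).choose m)^2 := by ring
        _ ≤ (3*(m+1)+1) * (2*(2*m+1).choose m)^2 := Nat.mul_le_mul_right _ (by omega)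
        _ = (3*(m+1)+1) * (Nat.centralBinom (m+1))^2 := by rw [hcb]
        _ ≤ 16^(m+1) := aux16 (m+1)
        _ = 4 * 4^(2*m+1) := by
            rw [show (16:ℕ)^(m+1) = (4^2)^(m+1) by norm_num, ← pow_mul,
              show 4 * 4^(2*m+1) = 4^(2*m+1+1) by ring,
              show 2*(m+1) = 2*m+1+1 by ring]
    exact Nat.le_of_mul_le_mul_left hmain (by norm_num)

lemma auxC (n : ℕ) (hn : 0 < n) :
    (n.choose (n/2) : ℝ) * (1/2)^n ≤ 1 / Real.sqrt n := by
  have h4 : (n : ℝ) * ((n.choose (n/2) : ℝ))^2 ≤ 4^n := by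
    have := auxB n
    exact_mod_cast this
  have hs : (0:ℝ) < Real.sqrt n := Real.sqrt_pos.mpr (by exact_mod_cast hn)
  have key : Real.sqrt n * (n.choose (n/2) : ℝ) ≤ 2^n := by
    have h1 : (Real.sqrt n * (n.choose (n/2) : ℝ))^2 ≤ ((2:ℝ)^n)^2 := by
      rw [mul_pow, Real.sq_sqrt (by positivity)]
      calc (n:ℝ) * ((n.choose (n/2):ℝ))^2 ≤ 4^n := h4
        _ = ((2:ℝ)^n)^2 := by rw [← pow_mul, mul_comm, pow_mul]; norm_num
    have := pow_le_pow_iff_left₀ (a := Real.sqrt n * (n.choose (n/2) : ℝ))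
      (b := (2:ℝ)^n) (by positivity) (by positivity) (n := 2) (by norm_num)
    exact this.mp h1
  have e : (1/2:ℝ)^n = (1:ℝ)/2^n := by rw [div_pow, one_pow]
  rw [e, mul_one_div, div_le_div_iff₀ (by positivity) hs]
  calc (n.choose (n/2) : ℝ) * Real.sqrt n ≤ 2^n := by linarith [key]
    _ = 1 * 2^n := by ring

theorem rademacher_weighted_sum_point_mass_le
    {Ω : Type*} [MeasureSpace Ω] [IsProbabilityMeasure (ℙ : Measure Ω)]
    {n : ℕ} (hn : 0 < n) (a : Fin n → ℤ) (ha : ∀ k, 0 < a k)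
    (Y : Fin n → Ω → ℤ) (hmeas : ∀ k, Measurable (Y k))
    (hindep : iIndepFun Y ℙ)
    (hplus : ∀ k, ℙ {ω | Y k ω = 1} = 1/2)
    (hminus : ∀ k, ℙ {ω | Y k ω = -1} = 1/2)
    (x : ℤ) :
    ℙ {ω | ∑ k, a k * Y k ω = x} ≤ ENNReal.ofReal (1 / Real.sqrt n) := by
  classical
  set ε : Finset (Fin n) → Fin n → ℤ := fun A k => if k ∈ A then 1 else -1 with hε
  set E : Finset (Fin n) → Set Ω := fun A => ⋂ k, Y k ⁻¹' {ε A k} with hE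
  set 𝒜 : Finset (Finset (Fin n)) :=
    Finset.univ.filter (fun A => ∑ k, a k * ε A k = x) with h𝒜
  -- bad set
  set N : Set Ω := ⋃ k, ({ω | Y k ω = 1} ∪ {ω | Y k ω = -1})ᶜ with hN
  have hNm : ℙ N = 0 := by
    refine measure_iUnion_null fun k => ?_
    have hm1 : MeasurableSet {ω | Y k ω = 1} := hmeas k (measurableSet_singleton 1)
    have hm2 : MeasurableSet {ω | Y k ω = -1} := hmeas k (measurableSet_singleton (-1))
    have hdisj : Disjoint {ω | Y k ω = 1} {ω | Y k ω = -1} := by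
      rw [Set.disjoint_left]; intro ω h1 h2; simp only [Set.mem_setOf_eq] at h1 h2; omega
    have hu : ℙ ({ω | Y k ω = 1} ∪ {ω | Y k ω = -1}) = 1 := by
      rw [measure_union hdisj hm2, hplus k, hminus k, ENNReal.add_halves]
    rw [measure_compl (hm1.union hm2) (measure_ne_top _ _), hu, measure_univ, tsub_self]
  -- atom measure
  have hatom : ∀ A : Finset (Fin n), ℙ (E A) = (2⁻¹ : ℝ≥0∞)^n := by
    intro A
    have hsingle : ∀ k, ℙ (Y k ⁻¹' {ε A k}) = 2⁻¹ := by
      intro k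
      by_cases hk : k ∈ A
      · have : Y k ⁻¹' {ε A k} = {ω | Y k ω = 1} := by
          ext ω; simp [hε, hk]
        rw [this, hplus k, one_div]
      · have : Y k ⁻¹' {ε A k} = {ω | Y k ω = -1} := by
          ext ω; simp [hε, hk]
        rw [this, hminus k, one_div]
    have := hindep.measure_inter_preimage_eq_mul (S := Finset.univ)
      (sets := fun k => {ε A k}) (fun i _ => measurableSet_singleton _)
    rw [show (⋂ i ∈ Finset.univ, Y i ⁻¹' {ε A i}) = E A by simp [hE]] at this
    rw [this, Finset.prod_congr rfl fun k _ => hsingle k]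
    simp
  -- inclusion
  have hincl : {ω | ∑ k, a k * Y k ω = x} ⊆ N ∪ ⋃ A ∈ 𝒜, E A := by
    intro ω hω
    by_cases hg : ω ∈ N
    · exact Or.inl hg
    refine Or.inr ?_
    have hval : ∀ k, Y k ω = 1 ∨ Y k ω = -1 := by
      intro k
      simp only [hN, Set.mem_iUnion, Set.mem_compl_iff, Set.mem_union, Set.mem_setOf_eq,
        not_exists, not_not] at hg
      have := hg k
      tauto
    set A : Finset (Fin n) := Finset.univ.filter (fun k => Y k ω = 1) with hA
    have hYA : ∀ k, Y k ω = ε A k := by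
      intro k
      rcases hval k with h | h
      · simp [hε, hA, h]
      · have : Y k ω ≠ 1 := by omega
        simp [hε, hA, h, this]
    have hAmem : A ∈ 𝒜 := by
      simp only [h𝒜, Finset.mem_filter, Finset.mem_univ, true_and]
      rw [← hω]
      exact Finset.sum_congr rfl fun k _ => by rw [hYA k]
    refine Set.mem_biUnion hAmem ?_
    simp only [hE, Set.mem_iInter, Set.mem_preimage, Set.mem_singleton_iff]
    exact fun k => hYA k
  -- antichain
  have hanti : IsAntichain (· ⊆ ·) (𝒜 : Set (Finset (Fin n))) := by
    intro A hA B hB hne hsub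
    simp only [h𝒜, Finset.coe_filter, Set.mem_setOf_eq, Finset.mem_univ, true_and] at hA hB
    have hlt : ∑ k, a k * ε A k < ∑ k, a k * ε B k := by
      rw [← sub_pos, ← Finset.sum_sub_distrib]
      have hterm : ∀ k, a k * ε B k - a k * ε A k
          = if k ∈ B ∧ k ∉ A then 2 * a k else 0 := by
        intro k
        by_cases hkA : k ∈ A
        · have hkB : k ∈ B := hsub hkA
          simp [hε, hkA, hkB]
        · by_cases hkB : k ∈ B
          · simp [hε, hkA, hkB]; ring
          · simp [hε, hkA, hkB]
      rw [Finset.sum_congr rfl fun k _ => hterm k, ← Finset.sum_filter]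
      apply Finset.sum_pos
      · intro k _; have := ha k; omega
      · have : ∃ k, k ∈ B ∧ k ∉ A := by
          by_contra hc
          push_neg at hc
          exact hne (Finset.Subset.antisymm hsub fun k hk => by
            by_contra hka; exact hka (hc k hk))
        obtain ⟨k, hk⟩ := this
        exact ⟨k, by simp [hk.1, hk.2]⟩
    omega
  have hcard : 𝒜.card ≤ n.choose (n/2) := by
    have := IsAntichain.sperner hanti
    simpa using this
  -- assemble
  calc ℙ {ω | ∑ k, a k * Y k ω = x}
      ≤ ℙ (N ∪ ⋃ A ∈ 𝒜, E A) := measure_mono hincl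
    _ ≤ ℙ N + ℙ (⋃ A ∈ 𝒜, E A) := measure_union_le _ _
    _ = ℙ (⋃ A ∈ 𝒜, E A) := by rw [hNm, zero_add]
    _ ≤ ∑ A ∈ 𝒜, ℙ (E A) := measure_biUnion_finset_le _ _
    _ = 𝒜.card * (2⁻¹ : ℝ≥0∞)^n := by
        rw [Finset.sum_congr rfl fun A _ => hatom A, Finset.sum_const, nsmul_eq_mul]
    _ ≤ (n.choose (n/2) : ℝ≥0∞) * (2⁻¹ : ℝ≥0∞)^n := by
        apply mul_le_mul_left
        exact_mod_cast hcard
    _ = ENNReal.ofReal ((n.choose (n/2) : ℝ) * (1/2)^n) := by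
        rw [ENNReal.ofReal_mul (by positivity), ENNReal.ofReal_pow (by norm_num),
          ENNReal.ofReal_natCast]
        have h12 : ENNReal.ofReal ((1:ℝ)/2) = 2⁻¹ := by
          rw [one_div, ENNReal.ofReal_inv_of_pos (by norm_num)]
          norm_num
        rw [h12]
    _ ≤ ENNReal.ofReal (1 / Real.sqrt n) := ENNReal.ofReal_le_ofReal (auxC n hn)
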